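/- Let A be a symmetric psd N×N matrix, S ⊆ {1,…,N}, Â = A(:,S)A(S,S)^†A(S,:) its Nyström approximation, and g ∈ ℝ^N. Then ⟨g, (A−Â)A^†(A−Â)g⟩ ≤ ⟨g, (A−Â)g⟩, provided the range of A − Â is contained in the range of A. -/

import Mathlib

open Matrix

/-- `P` is the Moore–Penrose pseudoinverse of `B` (real matrices). -/
def IsMoorePenrose {m : Type*} [Fintype m] (B P : Matrix m m ℝ) : Prop :=
  B * P * B = B ∧ P * B * P = P ∧ (B * P)ᵀ = B * P ∧ (P * B)ᵀ = P * B

lemma mp_unique {m : Type*} [Fintype m] {B P P' : Matrix m m ℝ}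
    (hP : IsMoorePenrose B P) (hP' : IsMoorePenrose B P') : P = P' := by
  obtain ⟨a1, a2, a3, a4⟩ := hP
  obtain ⟨b1, b2, b3, b4⟩ := hP'
  have hBP : B * P = B * P' := by
    calc B * P = B * P' * B * P := by conv_lhs => rw [← b1]
    _ = (B * P') * (B * P) := by rw [mul_assoc]
    _ = (B * P')ᵀ * (B * P)ᵀ := by rw [b3, a3]
    _ = ((B * P) * (B * P'))ᵀ := (transpose_mul _ _).symm
    _ = ((B * P * B) * P')ᵀ := by rw [mul_assoc (B * P) B P']
    _ = (B * P')ᵀ := by rw [a1]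
    _ = B * P' := b3
  have hPB : P * B = P' * B := by
    calc P * B = P * (B * P' * B) := by conv_lhs => rw [← b1]
    _ = (P * B) * (P' * B) := by simp only [mul_assoc]
    _ = (P * B)ᵀ * (P' * B)ᵀ := by rw [a4, b4]
    _ = ((P' * B) * (P * B))ᵀ := (transpose_mul _ _).symm
    _ = (P' * (B * P * B))ᵀ := by simp only [mul_assoc]
    _ = (P' * B)ᵀ := by rw [a1]
    _ = P' * B := b4
  calc P = P * B * P := a2.symm
  _ = P * (B * P') := by rw [mul_assoc, hBP]
  _ = (P * B) * P' := by rw [mul_assoc]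
  _ = P' * B * P' := by rw [hPB]
  _ = P' := b2

lemma mp_transpose {m : Type*} [Fintype m] {B P : Matrix m m ℝ}
    (hB : Bᵀ = B) (hP : IsMoorePenrose B P) : Pᵀ = P := by
  obtain ⟨a1, a2, a3, a4⟩ := hP
  have e : B * Pᵀ = P * B := by
    calc B * Pᵀ = Bᵀ * Pᵀ := by rw [hB]
    _ = (P * B)ᵀ := (transpose_mul _ _).symm
    _ = P * B := a4
  have e2 : Pᵀ * B = B * P := by
    calc Pᵀ * B = Pᵀ * Bᵀ := by rw [hB]
    _ = (B * P)ᵀ := (transpose_mul _ _).symm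
    _ = B * P := a3
  refine mp_unique (B := B) ?_ ⟨a1, a2, a3, a4⟩
  refine ⟨?_, ?_, ?_, ?_⟩
  · have := congrArg Matrix.transpose a1
    simpa [transpose_mul, hB, mul_assoc] using this
  · have := congrArg Matrix.transpose a2
    simpa [transpose_mul, hB, mul_assoc] using this
  · rw [e, a4]
  · rw [e2, a3]

lemma dot_self_nonneg {n : Type*} [Fintype n] (z : n → ℝ) : 0 ≤ z ⬝ᵥ z :=
  Finset.sum_nonneg fun i _ => mul_self_nonneg (z i)

lemma dot_symm {n : Type*} [Fintype n] {R : Matrix n n ℝ} (h : Rᵀ = R) (x y : n → ℝ) :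
    x ⬝ᵥ R *ᵥ y = y ⬝ᵥ R *ᵥ x := by
  rw [dotProduct_mulVec, dotProduct_comm]
  congr 1
  conv_lhs => rw [← h]
  exact vecMul_transpose R x

lemma quad_nonneg_of_proj {N : ℕ} {K : Matrix (Fin N) (Fin N) ℝ} (M : Matrix (Fin N) (Fin N) ℝ)
    (hKT : Kᵀ = K) (hKK : K * K = K) (x : Fin N → ℝ) : 0 ≤ x ⬝ᵥ (Mᵀ * K * M) *ᵥ x := by
  have key : Mᵀ * K * M = (K * M)ᵀ * (K * M) := by
    rw [transpose_mul, hKT]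
    calc Mᵀ * K * M = Mᵀ * (K * K) * M := by rw [hKK]
    _ = Mᵀ * K * (K * M) := by simp only [Matrix.mul_assoc]
  rw [key, ← mulVec_mulVec, dotProduct_mulVec, vecMul_transpose]
  exact dot_self_nonneg _

/-- For the Nyström residual `R = A − Â` of a psd matrix `A`, one has
`⟨g, R A† R g⟩ ≤ ⟨g, R g⟩`, provided the range of `R` lies in the range of `A`. -/
theorem nystrom_residual_quadratic_bound {N : ℕ} (A : Matrix (Fin N) (Fin N) ℝ)
    (hA : A.PosSemidef) (S : Finset (Fin N))
    (P : Matrix ↥S ↥S ℝ)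
    (hP : IsMoorePenrose (A.submatrix (Subtype.val) (Subtype.val)) P)
    (Q : Matrix (Fin N) (Fin N) ℝ) (hQ : IsMoorePenrose A Q)
    (g : Fin N → ℝ)
    (hrange : ∀ v : Fin N → ℝ, ∃ w : Fin N → ℝ,
      A.mulVec w = (A - A.submatrix id (Subtype.val : S → Fin N) * P * (A.submatrix id (Subtype.val : S → Fin N))ᵀ).mulVec v) :
    g ⬝ᵥ ((A - A.submatrix id (Subtype.val : S → Fin N) * P * (A.submatrix id (Subtype.val : S → Fin N))ᵀ) * Q *
        (A - A.submatrix id (Subtype.val : S → Fin N) * P * (A.submatrix id (Subtype.val : S → Fin N))ᵀ)).mulVec g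
      ≤ g ⬝ᵥ (A - A.submatrix id (Subtype.val : S → Fin N) * P * (A.submatrix id (Subtype.val : S → Fin N))ᵀ).mulVec g := by
  classical
  have hAT : Aᵀ = A := by
    rw [← conjTranspose_eq_transpose_of_trivial]; exact hA.1
  set C := A.submatrix id (Subtype.val : {x // x ∈ S} → Fin N) with hCdef
  set B := A.submatrix (Subtype.val : {x // x ∈ S} → Fin N) Subtype.val with hBdef
  have hBT : Bᵀ = B := by
    rw [hBdef, transpose_submatrix, hAT]
  have hPT : Pᵀ = P := mp_transpose hBT hP
  obtain ⟨M, hM⟩ : ∃ M : Matrix (Fin N) (Fin N) ℝ, A = Mᴴ * M := by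
    open scoped MatrixOrder in
    obtain ⟨B', hB'⟩ := CStarAlgebra.nonneg_iff_eq_star_mul_self.mp hA.nonneg
    exact ⟨B', hB'⟩
  rw [conjTranspose_eq_transpose_of_trivial] at hM
  set Ms := M.submatrix id (Subtype.val : {x // x ∈ S} → Fin N) with hMs
  have hC : C = Mᵀ * Ms := by
    ext i s
    simp [hCdef, hMs, hM, Matrix.mul_apply]
  have hB : B = Msᵀ * Ms := by
    ext s t
    simp [hBdef, hMs, hM, Matrix.mul_apply]
  have hPi : (Ms * P * Msᵀ) * (Ms * P * Msᵀ) = Ms * P * Msᵀ := by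
    have h : (Ms * P * Msᵀ) * (Ms * P * Msᵀ) = Ms * (P * (Msᵀ * Ms) * P) * Msᵀ := by
      simp only [Matrix.mul_assoc]
    rw [h, ← hB, hP.2.1]
  have hPiT : (Ms * P * Msᵀ)ᵀ = Ms * P * Msᵀ := by
    simp [transpose_mul, hPT, Matrix.mul_assoc]
  set R := A - C * P * Cᵀ with hRdef
  have hCPC : C * P * Cᵀ = Mᵀ * (Ms * P * Msᵀ) * M := by
    rw [hC]
    simp only [transpose_mul, transpose_transpose, Matrix.mul_assoc]
  have hRK : R = Mᵀ * (1 - Ms * P * Msᵀ) * M := by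
    rw [hRdef, hCPC, hM]
    simp only [Matrix.mul_sub, Matrix.sub_mul, mul_one, one_mul, Matrix.mul_assoc]
  have hKT : (1 - Ms * P * Msᵀ)ᵀ = 1 - Ms * P * Msᵀ := by
    rw [transpose_sub, transpose_one, hPiT]
  have hKK : (1 - Ms * P * Msᵀ) * (1 - Ms * P * Msᵀ) = 1 - Ms * P * Msᵀ := by
    simp only [mul_sub, sub_mul, mul_one, one_mul, hPi]
    abel
  have hRpsd : ∀ x, 0 ≤ x ⬝ᵥ R *ᵥ x := by
    intro x
    rw [hRK]
    exact quad_nonneg_of_proj M hKT hKK x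
  have hCPCpsd : ∀ x, 0 ≤ x ⬝ᵥ (C * P * Cᵀ) *ᵥ x := by
    intro x
    rw [hCPC]
    exact quad_nonneg_of_proj M hPiT hPi x
  have hRT : Rᵀ = R := by
    rw [hRdef]
    simp [transpose_sub, transpose_mul, transpose_transpose, hAT, hPT, Matrix.mul_assoc]
  obtain ⟨w, hw⟩ := hrange g
  set u := Q *ᵥ (R *ᵥ g) with hu
  have hAu : A *ᵥ u = R *ᵥ g := by
    rw [hu, ← hw]
    calc A *ᵥ (Q *ᵥ (A *ᵥ w)) = (A * Q * A) *ᵥ w := by simp [mulVec_mulVec, mul_assoc]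
    _ = A *ᵥ w := by rw [hQ.1]
  have hLHS : g ⬝ᵥ (R * Q * R) *ᵥ g = u ⬝ᵥ A *ᵥ u := by
    have h1 : (R * Q * R) *ᵥ g = R *ᵥ u := by
      rw [hu]; simp [mulVec_mulVec, mul_assoc]
    rw [h1, dot_symm hRT, ← hAu]
  rw [hLHS]
  have hb : u ⬝ᵥ A *ᵥ u = u ⬝ᵥ R *ᵥ g := by rw [hAu]
  have h1 : 0 ≤ (g - u) ⬝ᵥ R *ᵥ (g - u) := hRpsd _
  have h1' : 0 ≤ g ⬝ᵥ R *ᵥ g - u ⬝ᵥ R *ᵥ g - u ⬝ᵥ R *ᵥ g + u ⬝ᵥ R *ᵥ u := by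
    have e : (g - u) ⬝ᵥ R *ᵥ (g - u)
        = g ⬝ᵥ R *ᵥ g - u ⬝ᵥ R *ᵥ g - u ⬝ᵥ R *ᵥ g + u ⬝ᵥ R *ᵥ u := by
      rw [mulVec_sub, sub_dotProduct, dotProduct_sub, dotProduct_sub]
      rw [dot_symm hRT g u]
      ring
    rwa [e] at h1
  have h2 : 0 ≤ u ⬝ᵥ R *ᵥ g - u ⬝ᵥ R *ᵥ u := by
    have e : u ⬝ᵥ (C * P * Cᵀ) *ᵥ u = u ⬝ᵥ R *ᵥ g - u ⬝ᵥ R *ᵥ u := by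
      have : C * P * Cᵀ = A - R := by rw [hRdef]; abel
      rw [this, Matrix.sub_mulVec, dotProduct_sub, hb]
    rw [← e]
    exact hCPCpsd u
  rw [hb]
  linarith
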